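/- Let G be a finite simple connected graph on n vertices with diameter D, let r ∈ V be fixed, and consider the following process on parent assignments: initially the vertex set is partitioned into rooted trees (a spanning forest), each tree labeled by the id of its root, and r is the root of its tree with the minimum id over all of V. At each round, every vertex v adjacent (in G) to a vertex in a tree with smaller root-id than its own re-attaches as a child of such a neighbor belonging to the tree with minimum root-id among its neighbors, and adopts that root-id. Then after at most D rounds, all vertices belong to the tree rooted at r, and the parent assignment forms a single spanning tree of G. -/

import Mathlib

open SimpleGraph

/-- `T` is a spanning tree of `G`. -/
def IsSpanningTree {V : Type*} (G T : SimpleGraph V) : Prop :=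
  T ≤ G ∧ T.IsTree

/-- The 1-factor induced by a parent assignment `p : V → Option V`. -/
def parentGraph {V : Type*} (p : V → Option V) : SimpleGraph V :=
  SimpleGraph.fromEdgeSet {e | ∃ v u, p v = some u ∧ e = s(v, u)}

lemma parentGraph_adj {V : Type*} (p : V → Option V) {a b : V} :
    (parentGraph p).Adj a b ↔ (p a = some b ∨ p b = some a) ∧ a ≠ b := by
  rw [parentGraph, fromEdgeSet_adj]
  constructor
  · rintro ⟨⟨v, u, hv, he⟩, hne⟩
    rw [Sym2.eq_iff] at he
    rcases he with ⟨rfl, rfl⟩ | ⟨rfl, rfl⟩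
    · exact ⟨Or.inl hv, hne⟩
    · exact ⟨Or.inr hv, hne⟩
  · rintro ⟨h | h, hne⟩
    · exact ⟨⟨a, b, h, rfl⟩, hne⟩
    · exact ⟨⟨b, a, h, Sym2.eq_swap⟩, hne⟩

lemma parentGraph_acyclic {V : Type*} (p : V → Option V) (ρ : V → ℕ)
    (hp : ∀ v u, p v = some u → ρ u < ρ v) : (parentGraph p).IsAcyclic := by
  intro v c hc
  classical
  obtain ⟨v0, hv0mem, hv0max⟩ := Finset.exists_max_image c.support.toFinset ρ
    ⟨v, List.mem_toFinset.mpr c.start_mem_support⟩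
  have hv0mem' : v0 ∈ c.support := List.mem_toFinset.mp hv0mem
  have hcyc' := hc.rotate hv0mem'
  have hsup : ∀ w, w ∈ (c.rotate v0 hv0mem').support → ρ w ≤ ρ v0 := by
    intro w hw
    rw [(c.rotate v0 hv0mem').support_eq_cons] at hw
    rcases List.mem_cons.mp hw with rfl | hw
    · exact le_rfl
    · have := (Walk.support_rotate c v0 hv0mem').mem_iff.mp hw
      exact hv0max w (List.mem_toFinset.mpr (List.mem_of_mem_tail this))
  have hkey : ∀ w, w ∈ (c.rotate v0 hv0mem').support → (parentGraph p).Adj v0 w →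
      p v0 = some w := by
    intro w hw hadj
    rcases (parentGraph_adj p).mp hadj with ⟨h | h, _⟩
    · exact h
    · exact absurd (hsup w hw) (not_le.mpr (hp w v0 h))
  set c' := c.rotate v0 hv0mem' with hc'def
  clear_value c'
  clear hc'def hc hv0max hv0mem
  cases c' with
  | nil => exact hcyc'.ne_nil rfl
  | cons h1 q =>
    rename_i u1
    cases hq : q.reverse with
    | nil =>
      have := congrArg Walk.length hq
      simp only [Walk.length_reverse, Walk.length_nil] at this
      have h3 := hcyc'.three_le_length
      simp [this] at h3
    | cons h2 q2 =>
      rename_i u2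
      have hu1 : p v0 = some u1 := by
        refine hkey u1 ?_ h1
        simp [Walk.support_cons, q.start_mem_support]
      have hu2 : p v0 = some u2 := by
        refine hkey u2 ?_ h2
        have : u2 ∈ q.reverse.support := by rw [hq]; simp [Walk.support_cons, q2.start_mem_support]
        rw [Walk.support_reverse, List.mem_reverse] at this
        simp [Walk.support_cons, this]
      have hu12 : u1 = u2 := by rw [hu1] at hu2; exact Option.some_injective _ hu2
      subst hu12
      cases q2 with
      | nil =>
        have := congrArg Walk.length hq
        simp at this
        have h3 := hcyc'.three_le_length
        simp [this] at h3
      | cons h3 q3 =>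
        have hnd : q.support.Nodup := by
          have := hcyc'.2
          simpa [Walk.support_cons] using this
        rw [← List.nodup_reverse, ← Walk.support_reverse, hq] at hnd
        simp only [Walk.support_cons, List.nodup_cons] at hnd
        exact hnd.2.1 (by simpa using q3.end_mem_support)

/-- Convergence of the forest-merging phase of algorithm `tree&lead` (Claim 4):
`G` is a finite connected graph with distinct identities `idf`, `r` the vertex of
minimum identity, and `D` a bound on the diameter of `G`.  The initial state
(`par 0`, `rid 0`) is a spanning forest with each tree labeled by the identity of its
root; at each round, every vertex adjacent to a tree with smaller root-id re-attaches
to a neighbor of minimum root-id, adopting that root-id, and all other vertices keep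
their state.  Then after `D` rounds every vertex carries root-id `idf r`, every vertex
reaches `r` by following parent pointers, and the parent edges form a spanning tree
of `G`. -/
theorem treeandlead_merging_converges {V : Type*} [Fintype V] [DecidableEq V]
    (G : SimpleGraph V) (hG : G.Connected)
    (idf : V → ℕ) (hinj : Function.Injective idf)
    (r : V) (hrmin : ∀ v, idf r ≤ idf v)
    (D : ℕ) (hD : ∀ a b : V, G.dist a b ≤ D)
    (par : ℕ → V → Option V) (rid : ℕ → V → ℕ)
    -- initial state: a spanning forest, each tree labeled by its root's id
    (h0cyc : ∀ (v : V) (k : ℕ), 0 < k →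
      (fun o : Option V => o.bind (par 0))^[k] (some v) ≠ some v)
    (h0adj : ∀ v u, par 0 v = some u → G.Adj v u)
    (h0rid : ∀ v u, par 0 v = some u → rid 0 v = rid 0 u)
    (h0root : ∀ v, par 0 v = none → rid 0 v = idf v)
    (h0r : par 0 r = none)
    -- synchronous update rule: every enabled vertex re-attaches to a neighbor of
    -- minimum root-id among its neighbors
    (hupd : ∀ t v, (∃ u, G.Adj v u ∧ rid t u < rid t v) →
      ∃ u, G.Adj v u ∧ (∀ u', G.Adj v u' → rid t u ≤ rid t u') ∧
        par (t + 1) v = some u ∧ rid (t + 1) v = rid t u)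
    (hstay : ∀ t v, ¬ (∃ u, G.Adj v u ∧ rid t u < rid t v) →
      par (t + 1) v = par t v ∧ rid (t + 1) v = rid t v) :
    (∀ v, rid D v = idf r) ∧
    (∀ v : V, ∃ k : ℕ, (fun o : Option V => o.bind (par D))^[k] (some v) = some r) ∧
    IsSpanningTree G (parentGraph (par D)) := by
  classical
  set f : ℕ → Option V → Option V := fun t o => o.bind (par t) with hf
  have hfnone : ∀ t k, (f t)^[k] none = none := by
    intro t k
    induction k with
    | zero => rfl
    | succ k ih => rw [Function.iterate_succ_apply]; exact ih
  -- rid is constant along initial parent chains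
  have hchain0 : ∀ (k : ℕ) (v u : V), (f 0)^[k] (some v) = some u → rid 0 u = rid 0 v := by
    intro k
    induction k with
    | zero => intro v u h; simp at h; subst h; rfl
    | succ k ih =>
      intro v u h
      rw [Function.iterate_succ_apply] at h
      cases hpv : par 0 v with
      | none => rw [show f 0 (some v) = none by simp [hf, hpv], hfnone] at h; exact absurd h (by simp)
      | some w =>
        rw [show f 0 (some v) = some w by simp [hf, hpv]] at h
        rw [ih w u h, h0rid v w hpv]
  -- every vertex reaches a root of the initial forest
  have hroot0 : ∀ v : V, ∃ (k : ℕ) (w : V), (f 0)^[k] (some v) = some w ∧ par 0 w = none := by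
    intro v
    by_cases hn : ∃ k, (f 0)^[k] (some v) = none
    · obtain ⟨m, hm⟩ : ∃ m, Nat.find hn = m + 1 := by
        refine ⟨Nat.find hn - 1, ?_⟩
        have : Nat.find hn ≠ 0 := by
          intro h0
          have := Nat.find_spec hn
          rw [h0] at this
          simp at this
        omega
      have hmlt : m < Nat.find hn := by omega
      cases hmv : (f 0)^[m] (some v) with
      | none => exact absurd hmv (Nat.find_min hn hmlt)
      | some w =>
        refine ⟨m, w, hmv, ?_⟩
        have hspec := Nat.find_spec hn
        rw [hm, Function.iterate_succ_apply', hmv] at hspec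
        simpa [hf] using hspec
    · push_neg at hn
      have hcontra : ∀ i j : ℕ, i < j → (f 0)^[i] (some v) = (f 0)^[j] (some v) → False := by
        intro i j hij hgeq
        obtain ⟨w, hw⟩ := Option.ne_none_iff_exists'.mp (hn i)
        refine h0cyc w (j - i) (by omega) ?_
        have heq : (f 0)^[j - i] ((f 0)^[i] (some v)) = (f 0)^[j] (some v) := by
          rw [← Function.iterate_add_apply, show j - i + i = j from by omega]
        rw [hw] at heq
        rw [heq, ← hgeq, hw]
      obtain ⟨i, j, hne, hij⟩ := Finite.exists_ne_map_eq_of_infinite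
        (fun k => (f 0)^[k] (some v))
      rcases hne.lt_or_gt with hlt | hlt
      · exact absurd (hcontra i j hlt hij) not_false
      · exact absurd (hcontra j i hlt hij.symm) not_false
  -- rid 0 is in the range of idf
  have hrid0range : ∀ v : V, ∃ w, rid 0 v = idf w := by
    intro v
    obtain ⟨k, w, hk, hw⟩ := hroot0 v
    exact ⟨w, by rw [← hchain0 k v w hk, h0root w hw]⟩
  -- lower bound
  have hlow : ∀ t v, idf r ≤ rid t v := by
    intro t
    induction t with
    | zero => intro v; obtain ⟨w, hw⟩ := hrid0range v; rw [hw]; exact hrmin w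
    | succ t ih =>
      intro v
      by_cases hen : ∃ u, G.Adj v u ∧ rid t u < rid t v
      · obtain ⟨u, _, _, _, hr⟩ := hupd t v hen
        rw [hr]; exact ih u
      · rw [(hstay t v hen).2]; exact ih v
  -- freezing
  have hfreeze : ∀ t v, rid t v = idf r → par (t + 1) v = par t v ∧ rid (t + 1) v = rid t v := by
    intro t v hv
    refine hstay t v ?_
    rintro ⟨u, _, hlt⟩
    rw [hv] at hlt
    exact absurd (hlow t u) (not_le.mpr hlt)
  have hfreeze' : ∀ t s v, t ≤ s → rid t v = idf r → rid s v = idf r ∧ par s v = par t v := by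
    intro t s v hts hv
    induction s, hts using Nat.le_induction with
    | base => exact ⟨hv, rfl⟩
    | succ s hts ih =>
      obtain ⟨h1, h2⟩ := ih
      obtain ⟨h3, h4⟩ := hfreeze s v h1
      exact ⟨h4 ▸ h1, h3 ▸ h2⟩
  -- parent pointers are G-edges at all times
  have hadjt : ∀ t v u, par t v = some u → G.Adj v u := by
    intro t
    induction t with
    | zero => exact h0adj
    | succ t ih =>
      intro v u h
      by_cases hen : ∃ u', G.Adj v u' ∧ rid t u' < rid t v
      · obtain ⟨u', hadj', _, hp', _⟩ := hupd t v hen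
        rw [hp'] at h
        rwa [← Option.some_injective _ h]
      · rw [(hstay t v hen).1] at h
        exact ih v u h
  have hrid0r : rid 0 r = idf r := h0root r h0r
  -- spreading
  have hspread : ∀ t v, G.dist r v ≤ t → rid t v = idf r := by
    intro t
    induction t with
    | zero =>
      intro v hv
      have : r = v := (hG.dist_eq_zero_iff).mp (Nat.le_zero.mp hv)
      rw [← this]; exact hrid0r
    | succ t ih =>
      intro v hv
      by_cases hle : G.dist r v ≤ t
      · exact (hfreeze' t (t + 1) v (Nat.le_succ t) (ih v hle)).1
      · have hd : G.dist v r = t + 1 := by rw [SimpleGraph.dist_comm]; omega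
        obtain ⟨p, hp⟩ := hG.exists_walk_length_eq_dist v r
        rw [hd] at hp
        cases p with
        | nil => simp at hp
        | cons hadj q =>
          rename_i u
          have hq : G.dist r u ≤ t := by
            rw [SimpleGraph.dist_comm]
            have := SimpleGraph.dist_le q
            simp [Walk.length_cons] at hp
            omega
          have hu : rid t u = idf r := ih u hq
          by_cases hv0 : rid t v = idf r
          · exact (hfreeze' t (t + 1) v (Nat.le_succ t) hv0).1
          · have hlt : rid t u < rid t v := by
              rw [hu]
              exact lt_of_le_of_ne (hlow t v) (Ne.symm hv0)
            obtain ⟨u', hadj', hmin', hp', hr'⟩ := hupd t v ⟨u, hadj, hlt⟩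
            have h1 : rid t u' ≤ idf r := hu ▸ hmin' u hadj
            rw [hr']
            exact le_antisymm h1 (hlow t u')
  have part1 : ∀ v, rid D v = idf r := fun v => hspread D v (hD r v)
  -- first-join times
  have hexτ : ∀ v : V, ∃ t, rid t v = idf r := fun v => ⟨D, part1 v⟩
  set τ : V → ℕ := fun v => Nat.find (hexτ v) with hτ
  have hτspec : ∀ v, rid (τ v) v = idf r := fun v => Nat.find_spec (hexτ v)
  have hτD : ∀ v, τ v ≤ D := fun v => Nat.find_le (part1 v)
  have hparD : ∀ v, par D v = par (τ v) v := fun v =>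
    (hfreeze' (τ v) D v (hτD v) (hτspec v)).2
  -- reachability to r along par D
  have reach : ∀ v : V, ∃ k : ℕ, (f D)^[k] (some v) = some r := by
    have key : ∀ (m : ℕ) (v : V), τ v ≤ m → ∃ k : ℕ, (f D)^[k] (some v) = some r := by
      intro m
      induction m with
      | zero =>
        intro v hv
        have h0v : rid 0 v = idf r := by
          have := hτspec v
          rwa [Nat.le_zero.mp hv] at this
        obtain ⟨k, w, hk, hw⟩ := hroot0 v
        have hwr : w = r := by
          apply hinj
          rw [← h0root w hw, hchain0 k v w hk, h0v]
        -- transfer the chain from time 0 to time D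
        have htrans : ∀ j u, (f 0)^[j] (some v) = some u → (f D)^[j] (some v) = some u := by
          intro j
          induction j with
          | zero => intro u h; exact h
          | succ j ih =>
            intro u h
            rw [Function.iterate_succ_apply'] at h ⊢
            cases hj : (f 0)^[j] (some v) with
            | none => rw [hj] at h; simp [hf] at h
            | some u' =>
              rw [hj] at h
              rw [ih u' hj]
              have hu' : rid 0 u' = idf r := by rw [hchain0 j v u' hj, h0v]
              have : par D u' = par 0 u' := (hfreeze' 0 D u' (Nat.zero_le D) hu').2
              simpa [hf, this] using h
        exact ⟨k, by rw [htrans k w hk, hwr]⟩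
      | succ m ih =>
        intro v hv
        by_cases hle : τ v ≤ m
        · exact ih v hle
        · have hτv : τ v = m + 1 := by omega
          have h1 : rid (m + 1) v = idf r := by rw [← hτv]; exact hτspec v
          have h2 : rid m v ≠ idf r := Nat.find_min (hexτ v) (show m < τ v by omega)
          by_cases hen : ∃ u, G.Adj v u ∧ rid m u < rid m v
          · obtain ⟨u', hadj', hmin', hp', hr'⟩ := hupd m v hen
            have hu'r : rid m u' = idf r := by rw [← hr', h1]
            have hτu' : τ u' ≤ m := Nat.find_le hu'r
            obtain ⟨k, hk⟩ := ih u' hτu'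
            have hpD : par D v = some u' := by rw [hparD v, hτv]; exact hp'
            refine ⟨k + 1, ?_⟩
            rw [Function.iterate_succ_apply]
            have : f D (some v) = some u' := by simp [hf, hpD]
            rw [this, hk]
          · exact absurd ((hstay m v hen).2 ▸ h1) h2
    exact fun v => key D v (hτD v)
  refine ⟨part1, reach, ?_, ?_⟩
  · -- parentGraph ≤ G
    intro a b hab
    rcases (parentGraph_adj (par D)).mp hab with ⟨h | h, _⟩
    · exact hadjt D a b h
    · exact (hadjt D b a h).symm
  · -- tree
    set ρ : V → ℕ := fun v => Nat.find (reach v) with hρ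
    have hρspec : ∀ v, (f D)^[ρ v] (some v) = some r := fun v => Nat.find_spec (reach v)
    have hρpar : ∀ v u, par D v = some u → ρ u < ρ v := by
      intro v u hp
      have hvr : ρ v ≠ 0 := by
        intro h0
        have hvv := hρspec v
        rw [h0] at hvv
        simp at hvv
        have hpr : par D r = none := by
          rw [(hfreeze' 0 D r (Nat.zero_le D) hrid0r).2]; exact h0r
        rw [hvv, hpr] at hp
        simp at hp
      obtain ⟨j, hj⟩ : ∃ j, ρ v = j + 1 := ⟨ρ v - 1, by omega⟩
      have := hρspec v
      rw [hj, Function.iterate_succ_apply] at this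
      have hfv : f D (some v) = some u := by simp [hf, hp]
      rw [hfv] at this
      have : ρ u ≤ j := Nat.find_le this
      omega
    constructor
    · -- connected
      have hreach : ∀ v, (parentGraph (par D)).Reachable v r := by
        have : ∀ (k : ℕ) (v : V), (f D)^[k] (some v) = some r →
            (parentGraph (par D)).Reachable v r := by
          intro k
          induction k with
          | zero => intro v h; simp at h; subst h; rfl
          | succ k ih =>
            intro v h
            rw [Function.iterate_succ_apply] at h
            cases hp : par D v with
            | none => rw [show f D (some v) = none by simp [hf, hp], hfnone] at h; simp at h
            | some u =>
              rw [show f D (some v) = some u by simp [hf, hp]] at h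
              have hadj : (parentGraph (par D)).Adj v u :=
                (parentGraph_adj (par D)).mpr ⟨Or.inl hp, (hadjt D v u hp).ne⟩
              exact hadj.reachable.trans (ih u h)
        intro v
        obtain ⟨k, hk⟩ := reach v
        exact this k v hk
      rw [connected_iff_exists_forall_reachable]
      exact ⟨r, fun w => (hreach w).symm⟩
    · exact parentGraph_acyclic (par D) ρ hρpar
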